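/- Let k ≥ 0 be an integer, and let 0 < φ, μ ≤ 1 with φ ≤ 1/5. Then there is an integer K ≥ k with the following property: for every graph G and every (φ,μ)-shrink-resistant blockade (B_i : i∈I) in G of length at least K, if 1−μ ≥ |G|^{-φ}, then there exists I' ⊆ I with |I'| = k such that (B_i : i∈I') has a (5φ,μ)-band. -/

import Mathlib

/-- The max-degree from `X` to `Y`: the maximum over `v ∈ X` of the number of
neighbours of `v` in `Y` (0 if `X` is empty). -/
noncomputable def maxDegFrom {V : Type} (G : SimpleGraph V) (X Y : Set V) : ℕ :=
  sSup ((fun v => (G.neighborSet v ∩ Y).ncard) '' X)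

/-- `X` is anticomplete to `Y`: there are no edges between them. -/
def AnticompSets {V : Type} (G : SimpleGraph V) (X Y : Set V) : Prop :=
  ∀ x ∈ X, ∀ y ∈ Y, ¬ G.Adj x y

/-- A pure pair: disjoint sets, complete or anticomplete to each other. -/
def PurePair {V : Type} (G : SimpleGraph V) (Z1 Z2 : Set V) : Prop :=
  Disjoint Z1 Z2 ∧ ((∀ x ∈ Z1, ∀ y ∈ Z2, G.Adj x y) ∨ AnticompSets G Z1 Z2)

/-- `X` covers `B`: every vertex of `B` has a neighbour in `X`. -/
def CoversSet {V : Type} (G : SimpleGraph V) (X B : Set V) : Prop :=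
  ∀ v ∈ B, ∃ x ∈ X, G.Adj x v

/-- `G` contains `H` as an induced subgraph. -/
def GraphContains {V W : Type} (G : SimpleGraph V) (H : SimpleGraph W) : Prop :=
  ∃ f : W → V, Function.Injective f ∧ ∀ a b : W, G.Adj (f a) (f b) ↔ H.Adj a b

/-- The ordered graph `G` contains the ordered graph `H`: an order-preserving
induced-subgraph embedding. -/
def OrdGraphContains {V W : Type} [LinearOrder V] [LinearOrder W]
    (G : SimpleGraph V) (H : SimpleGraph W) : Prop :=
  ∃ f : W → V, StrictMono f ∧ ∀ a b : W, G.Adj (f a) (f b) ↔ H.Adj a b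

/-- A blockade: a family of pairwise disjoint nonempty vertex subsets indexed by
a finite set of integers. -/
def IsBlockade {V : Type} (I : Finset ℤ) (B : ℤ → Set V) : Prop :=
  (∀ i ∈ I, (B i).Nonempty) ∧ ∀ i ∈ I, ∀ j ∈ I, i ≠ j → Disjoint (B i) (B j)

/-- A blockade in an ordered graph: additionally the blocks are intervals
numbered in order. -/
def IsOrdBlockade {V : Type} [LinearOrder V] (I : Finset ℤ) (B : ℤ → Set V) : Prop :=
  IsBlockade I B ∧ ∀ i ∈ I, ∀ j ∈ I, i < j → ∀ u ∈ B i, ∀ v ∈ B j, u < v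

/-- The blockade `(B i : i ∈ I)` has width at least `w`
(the width being the minimum cardinality of a block, `|G|` if `I = ∅`). -/
def WidthGE {V : Type} [Fintype V] (I : Finset ℤ) (B : ℤ → Set V) (w : ℝ) : Prop :=
  (∀ i ∈ I, w ≤ ((B i).ncard : ℝ)) ∧ w ≤ (Fintype.card V : ℝ)

/-- The width of a blockade: the minimum cardinality of a block (`|G|` if `I = ∅`). -/
noncomputable def blockadeWidth {V : Type} [Fintype V] (I : Finset ℤ) (B : ℤ → Set V) : ℕ :=
  if h : I.Nonempty then I.inf' h (fun i => (B i).ncard) else Fintype.card V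

/-- The blockade has shrinkage at most `s`: its width is at least `|G|^(1-s)`. -/
def ShrinkageLE {V : Type} [Fintype V] (I : Finset ℤ) (B : ℤ → Set V) (s : ℝ) : Prop :=
  WidthGE I B ((Fintype.card V : ℝ) ^ ((1 : ℝ) - s))

/-- The blockade has linkage at most `lam`: for all distinct `i, j`, the
max-degree from `B i` to `B j` is at most `lam * |B j|`. -/
def LinkageLE {V : Type} (G : SimpleGraph V) (I : Finset ℤ) (B : ℤ → Set V) (lam : ℝ) : Prop :=
  ∀ i ∈ I, ∀ j ∈ I, i ≠ j → (maxDegFrom G (B i) (B j) : ℝ) ≤ lam * ((B j).ncard : ℝ)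

/-- The blockade is `(phi, mu)`-shrink-resistant. -/
def ShrinkResistant {V : Type} [Fintype V] (G : SimpleGraph V) (I : Finset ℤ)
    (B : ℤ → Set V) (phi mu : ℝ) : Prop :=
  ∀ h ∈ I, ∀ j ∈ I, h ≠ j → ∀ X ⊆ B h, ∀ Y ⊆ B j,
    mu * ((B h).ncard : ℝ) ≤ (X.ncard : ℝ) → mu * ((B j).ncard : ℝ) ≤ (Y.ncard : ℝ) →
    (maxDegFrom G (B h) (B j) : ℝ) * (Fintype.card V : ℝ) ^ (-phi) < (maxDegFrom G X Y : ℝ)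

/-- `tau` is a `(phi, mu)`-band for the blockade `(B i : i ∈ I)`. -/
def IsBand {V : Type} [Fintype V] (G : SimpleGraph V) (I : Finset ℤ)
    (B : ℤ → Set V) (tau phi mu : ℝ) : Prop :=
  ∀ h ∈ I, ∀ j ∈ I, h ≠ j →
    ((maxDegFrom G (B h) (B j) : ℝ) ≤ tau * ((B j).ncard : ℝ)) ∧
    ∀ X ⊆ B h, ∀ Y ⊆ B j,
      mu * ((B h).ncard : ℝ) ≤ (X.ncard : ℝ) → mu * ((B j).ncard : ℝ) ≤ (Y.ncard : ℝ) →
      tau * (Fintype.card V : ℝ) ^ (-phi) * ((B j).ncard : ℝ) < (maxDegFrom G X Y : ℝ)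

/-- There do not exist disjoint anticomplete sets both of size at least `|G|^(1-c)`. -/
def NoBigAnticomp {V : Type} [Fintype V] (G : SimpleGraph V) (c : ℝ) : Prop :=
  ¬ ∃ Z1 Z2 : Set V, Disjoint Z1 Z2 ∧ AnticompSets G Z1 Z2 ∧
      (Fintype.card V : ℝ) ^ ((1 : ℝ) - c) ≤ (Z1.ncard : ℝ) ∧
      (Fintype.card V : ℝ) ^ ((1 : ℝ) - c) ≤ (Z2.ncard : ℝ)

/-- The blockade `(B i : i ∈ H ∪ I ∪ J)` is leaf-covered with partition `(H, I, J)`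
and parameters `w, W, lam, phi, mu, tau`. -/
def LeafCovered {V : Type} [Fintype V] (G : SimpleGraph V) (H I J : Finset ℤ)
    (B : ℤ → Set V) (w W lam phi mu tau : ℝ) : Prop :=
  WidthGE H B w ∧ LinkageLE G H B lam ∧ WidthGE I B W ∧
  (∀ h ∈ H, ∀ j ∈ J, ∃ X ⊆ B j, CoversSet G X (B h) ∧
      ∀ i ∈ (H ∪ I).erase h, AnticompSets G X (B i)) ∧
  IsBand G (I ∪ J) B tau phi mu ∧
  (∀ h ∈ H, ∀ i ∈ I ∪ J, (maxDegFrom G (B h) (B i) : ℝ) ≤ tau * ((B i).ncard : ℝ))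

/-- The clique number of a graph. -/
noncomputable def cliqueNumber {V : Type} (G : SimpleGraph V) : ℕ :=
  sSup {n | ∃ s : Finset V, G.IsNClique n s}



lemma maxDegFrom_le {V : Type} (G : SimpleGraph V) (X Y : Set V) (c : ℕ)
    (h : ∀ v ∈ X, (G.neighborSet v ∩ Y).ncard ≤ c) : maxDegFrom G X Y ≤ c := by
  apply csSup_le'
  rintro x ⟨v, hv, rfl⟩
  exact h v hv

lemma maxDegFrom_le_ncard {V : Type} [Fintype V] (G : SimpleGraph V) (X Y : Set V) :
    maxDegFrom G X Y ≤ Y.ncard :=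
  maxDegFrom_le G X Y _ fun _ _ => Set.ncard_le_ncard Set.inter_subset_right (Set.toFinite Y)

lemma bddAbove_mdf {V : Type} [Fintype V] (G : SimpleGraph V) (X Y : Set V) :
    BddAbove ((fun v => (G.neighborSet v ∩ Y).ncard) '' X) := by
  refine ⟨Y.ncard, ?_⟩
  rintro x ⟨v, hv, rfl⟩
  exact Set.ncard_le_ncard Set.inter_subset_right (Set.toFinite Y)

lemma le_maxDegFrom {V : Type} [Fintype V] (G : SimpleGraph V) (X Y : Set V) {v : V}
    (hv : v ∈ X) : (G.neighborSet v ∩ Y).ncard ≤ maxDegFrom G X Y :=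
  le_csSup (bddAbove_mdf G X Y) ⟨v, hv, rfl⟩

lemma maxDegFrom_mem {V : Type} [Fintype V] (G : SimpleGraph V) (X Y : Set V)
    (hX : X.Nonempty) : ∃ v ∈ X, maxDegFrom G X Y = (G.neighborSet v ∩ Y).ncard := by
  obtain ⟨v, hv, he⟩ := Nat.sSup_mem (hX.image _) (bddAbove_mdf G X Y)
  exact ⟨v, hv, he.symm⟩

open Classical in
lemma sum_comm_edges {V : Type} (G : SimpleGraph V) (s t : Finset V) :
    ∑ v ∈ s, (t.filter (G.Adj v)).card = ∑ w ∈ t, (s.filter (fun v => G.Adj v w)).card := by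
  simp only [Finset.card_filter]
  rw [Finset.sum_comm]

open Classical in
lemma ncard_inter_eq_filter {V : Type} (G : SimpleGraph V) (Y : Set V) (hY : Y.Finite) (v : V) :
    (G.neighborSet v ∩ Y).ncard = (hY.toFinset.filter (G.Adj v)).card := by
  rw [Set.ncard_eq_toFinset_card _ (hY.subset Set.inter_subset_right)]
  congr 1
  ext w
  simp [SimpleGraph.mem_neighborSet, and_comm]

-- the cross-counting lemma
open Classical in
lemma cross_count {V : Type} [Fintype V] (G : SimpleGraph V) (Bi Bj : Set V)
    (hBi : Bi.Nonempty) (hBj : Bj.Nonempty) (phi mu : ℝ) (hphi0 : 0 < phi)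
    (hmu0 : 0 < mu) (hmu1 : mu ≤ 1)
    (hmu' : (Fintype.card V : ℝ) ^ (-phi) ≤ 1 - mu)
    (hSRij : ∀ X ⊆ Bi, ∀ Y ⊆ Bj,
      mu * (Bi.ncard : ℝ) ≤ (X.ncard : ℝ) → mu * (Bj.ncard : ℝ) ≤ (Y.ncard : ℝ) →
      (maxDegFrom G Bi Bj : ℝ) * (Fintype.card V : ℝ) ^ (-phi) < (maxDegFrom G X Y : ℝ)) :
    (maxDegFrom G Bi Bj : ℝ) * (Bi.ncard : ℝ) * (Fintype.card V : ℝ) ^ (-(2*phi))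
      ≤ (maxDegFrom G Bj Bi : ℝ) * (Bj.ncard : ℝ) := by
  set N : ℝ := (Fintype.card V : ℝ) with hN
  have hNpos : 0 < N := by
    have : (Fintype.card V) ≠ 0 := by
      have := Fintype.card_pos_iff.2 ⟨hBi.some⟩
      omega
    positivity
  set dij : ℕ := maxDegFrom G Bi Bj with hdij
  set dji : ℕ := maxDegFrom G Bj Bi with hdji
  have fi : Bi.Finite := Set.toFinite _
  have fj : Bj.Finite := Set.toFinite _
  have bipos : (0:ℝ) < Bi.ncard := by
    have := (Set.ncard_pos fi).2 hBi; exact_mod_cast this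
  have bjpos : (0:ℝ) < Bj.ncard := by
    have := (Set.ncard_pos fj).2 hBj; exact_mod_cast this
  set e : ℕ := ∑ v ∈ fi.toFinset, (fj.toFinset.filter (G.Adj v)).card with he
  -- upper bound
  have hupper : (e:ℝ) ≤ (dji : ℝ) * (Bj.ncard : ℝ) := by
    have h1 : e = ∑ w ∈ fj.toFinset, (fi.toFinset.filter (fun v => G.Adj v w)).card :=
      sum_comm_edges G _ _
    have h2 : ∀ w ∈ fj.toFinset, (fi.toFinset.filter (fun v => G.Adj v w)).card ≤ dji := by
      intro w hw
      have hmem : w ∈ Bj := fj.mem_toFinset.1 hw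
      have : (fi.toFinset.filter (fun v => G.Adj v w)).card
          = (G.neighborSet w ∩ Bi).ncard := by
        rw [ncard_inter_eq_filter G Bi fi w]
        congr 1
        ext v
        simp [G.adj_comm]
      rw [this]
      exact le_maxDegFrom G Bj Bi hmem
    have := Finset.sum_le_card_nsmul _ _ _ h2
    rw [← h1] at this
    have hcard : fj.toFinset.card = Bj.ncard := (Set.ncard_eq_toFinset_card _ fj).symm
    calc (e:ℝ) ≤ (fj.toFinset.card * dji : ℕ) := by exact_mod_cast this
      _ = (dji : ℝ) * (Bj.ncard : ℝ) := by rw [hcard]; push_cast; ring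
  -- lower bound
  set X0 : Set V := Bi ∩ {v | ((G.neighborSet v ∩ Bj).ncard : ℝ) ≤ (dij : ℝ) * N ^ (-phi)}
    with hX0def
  have hX0lt : (X0.ncard : ℝ) < mu * (Bi.ncard : ℝ) := by
    by_contra hcon
    push_neg at hcon
    have hX0ne : X0.Nonempty := by
      have hpos : 0 < X0.ncard := by
        by_contra h0
        push_neg at h0
        interval_cases hX : X0.ncard
        push_cast at hcon
        nlinarith
      exact Set.nonempty_of_ncard_ne_zero (by omega)
    obtain ⟨v, hv, hveq⟩ := maxDegFrom_mem G X0 Bj hX0ne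
    have hSR := hSRij X0 Set.inter_subset_left Bj subset_rfl hcon
      (by nlinarith)
    rw [hveq] at hSR
    exact absurd hSR (not_lt.2 hv.2)
  set X1 : Set V := Bi \ X0 with hX1def
  have hX1card : X1.ncard + X0.ncard = Bi.ncard :=
    Set.ncard_diff_add_ncard_of_subset Set.inter_subset_left fi
  have hX1ge : N ^ (-phi) * (Bi.ncard : ℝ) ≤ (X1.ncard : ℝ) := by
    have h1 : (X1.ncard : ℝ) = (Bi.ncard : ℝ) - (X0.ncard : ℝ) := by
      have := hX1card; push_cast [← this]; ring
    rw [h1]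
    nlinarith
  have hlower : (dij:ℝ) * N ^ (-phi) * (X1.ncard : ℝ) ≤ (e : ℝ) := by
    have f1 : X1.Finite := fi.subset Set.diff_subset
    have hsub : f1.toFinset ⊆ fi.toFinset := by
      intro v hv
      rw [Set.Finite.mem_toFinset] at *
      exact hv.1
    have hstep : ∑ v ∈ f1.toFinset, (fj.toFinset.filter (G.Adj v)).card ≤ e :=
      Finset.sum_le_sum_of_subset hsub
    have hterm : ∀ v ∈ f1.toFinset, (dij:ℝ) * N ^ (-phi)
        ≤ ((fj.toFinset.filter (G.Adj v)).card : ℝ) := by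
      intro v hv
      rw [Set.Finite.mem_toFinset] at hv
      have hnot : ¬ ((G.neighborSet v ∩ Bj).ncard : ℝ) ≤ (dij : ℝ) * N ^ (-phi) := by
        intro hle
        exact hv.2 ⟨hv.1, hle⟩
      rw [← ncard_inter_eq_filter G Bj fj v]
      linarith [not_le.1 hnot]
    have hsum : (f1.toFinset.card : ℝ) * ((dij:ℝ) * N ^ (-phi))
        ≤ ∑ v ∈ f1.toFinset, ((fj.toFinset.filter (G.Adj v)).card : ℝ) := by
      have := Finset.card_nsmul_le_sum f1.toFinset
        (fun v => ((fj.toFinset.filter (G.Adj v)).card : ℝ)) ((dij:ℝ) * N ^ (-phi)) hterm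
      rwa [nsmul_eq_mul] at this
    have hcast : ∑ v ∈ f1.toFinset, ((fj.toFinset.filter (G.Adj v)).card : ℝ)
        = ((∑ v ∈ f1.toFinset, (fj.toFinset.filter (G.Adj v)).card : ℕ) : ℝ) := by
      push_cast; ring
    have hc1 : f1.toFinset.card = X1.ncard := (Set.ncard_eq_toFinset_card _ f1).symm
    have : ((∑ v ∈ f1.toFinset, (fj.toFinset.filter (G.Adj v)).card : ℕ) : ℝ) ≤ (e:ℝ) := by
      exact_mod_cast hstep
    rw [hcast, hc1] at hsum
    nlinarith
  -- combine
  have hNphi : (0:ℝ) < N ^ (-phi) := Real.rpow_pos_of_pos hNpos _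
  have hNN : N ^ (-phi) * N ^ (-phi) = N ^ (-(2*phi)) := by
    rw [← Real.rpow_add hNpos]; ring_nf
  have key : (dij:ℝ) * N ^ (-phi) * (N ^ (-phi) * (Bi.ncard : ℝ)) ≤ (dji : ℝ) * (Bj.ncard:ℝ) := by
    have h1 : (dij:ℝ) * N ^ (-phi) * (N ^ (-phi) * (Bi.ncard : ℝ))
        ≤ (dij:ℝ) * N ^ (-phi) * (X1.ncard : ℝ) := by
      have hd0 : (0:ℝ) ≤ (dij:ℝ) * N ^ (-phi) := by positivity
      nlinarith
    linarith
  calc (dij : ℝ) * (Bi.ncard : ℝ) * N ^ (-(2*phi))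
      = (dij:ℝ) * N ^ (-phi) * (N ^ (-phi) * (Bi.ncard : ℝ)) := by rw [← hNN]; ring
    _ ≤ (dji : ℝ) * (Bj.ncard:ℝ) := key



lemma chainLemma (m : ℕ) : ∀ (T : ℕ) (S : Finset ℤ) (c : ℤ → ℤ → ℕ),
    (∀ i ∈ S, ∀ j ∈ S, c i j < m) → (m+1)^T ≤ S.card →
    ∃ l : List (ℤ × ℕ), l.length = T ∧ (∀ p ∈ l, p.1 ∈ S) ∧ (∀ p ∈ l, p.2 < m) ∧
      l.Pairwise (fun p q => p.1 < q.1 ∧ c p.1 q.1 = p.2) := by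
  intro T
  induction T with
  | zero => intro S c _ _; exact ⟨[], rfl, by simp, by simp, List.Pairwise.nil⟩
  | succ T ih =>
    intro S c hc hcard
    have hne : S.Nonempty := by
      rw [← Finset.card_pos]
      calc 0 < (m+1)^(T+1) := Nat.pow_pos (Nat.succ_pos m)
        _ ≤ S.card := hcard
    set v := S.min' hne with hv
    have hvS : v ∈ S := S.min'_mem hne
    have hmapsto : ∀ x ∈ S.erase v, c v x ∈ Finset.range m := by
      intro x hx
      rw [Finset.mem_range]
      exact hc v hvS x (Finset.mem_of_mem_erase hx)
    have hm : 0 < m := by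
      rcases Nat.eq_zero_or_pos m with h0 | h; · exact absurd (hc v hvS v hvS) (by omega)
      exact h
    have hcard2 : (Finset.range m).card * (m+1)^T ≤ (S.erase v).card := by
      rw [Finset.card_range, Finset.card_erase_of_mem hvS]
      have : (m+1)^(T+1) = m * (m+1)^T + (m+1)^T := by ring
      have h1 : 1 ≤ (m+1)^T := Nat.one_le_pow _ _ (Nat.succ_pos m)
      omega
    obtain ⟨a, ha, hfib⟩ := Finset.exists_le_card_fiber_of_mul_le_card_of_maps_to hmapsto
      ⟨0, Finset.mem_range.2 hm⟩ hcard2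
    set J := (S.erase v).filter (fun x => c v x = a) with hJ
    have hJS : J ⊆ S := (Finset.filter_subset _ _).trans (Finset.erase_subset _ _)
    obtain ⟨l, hlen, hmem, hcol, hpw⟩ := ih J c (fun i hi j hj => hc i (hJS hi) j (hJS hj)) hfib
    refine ⟨(v, a) :: l, by simp [hlen], ?_, ?_, ?_⟩
    · rintro p hp
      rcases List.mem_cons.1 hp with rfl | hp
      · exact hvS
      · exact hJS (hmem p hp)
    · rintro p hp
      rcases List.mem_cons.1 hp with rfl | hp
      · exact Finset.mem_range.1 ha
      · exact hcol p hp
    · rw [List.pairwise_cons]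
      refine ⟨?_, hpw⟩
      intro q hq
      have hqJ : q.1 ∈ J := hmem q hq
      rw [hJ, Finset.mem_filter] at hqJ
      obtain ⟨hqe, hqc⟩ := hqJ
      have h1 : v ≤ q.1 := S.min'_le _ (Finset.mem_of_mem_erase hqe)
      have h2 : q.1 ≠ v := (Finset.mem_erase.1 hqe).1
      exact ⟨lt_of_le_of_ne h1 (Ne.symm h2), hqc⟩

lemma lenSum (m : ℕ) : ∀ l : List (ℤ × ℕ), (∀ p ∈ l, p.2 < m) →
    l.length = ∑ a ∈ Finset.range m, (l.filter (fun p => p.2 = a)).length := by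
  intro l
  induction l with
  | nil => simp
  | cons p l ih =>
    intro h
    have hp : p.2 < m := h p List.mem_cons_self
    have ihl := ih (fun q hq => h q (List.mem_cons_of_mem _ hq))
    simp only [List.length_cons]
    rw [ihl]
    have key : ∀ a ∈ Finset.range m, ((p :: l).filter (fun q => q.2 = a)).length
        = (l.filter (fun q => q.2 = a)).length + (if p.2 = a then 1 else 0) := by
      intro a _
      rw [List.filter_cons]
      by_cases hpa : p.2 = a <;> simp [hpa]
    rw [Finset.sum_congr rfl key, Finset.sum_add_distrib]
    have : ∑ a ∈ Finset.range m, (if p.2 = a then 1 else 0) = 1 := by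
      rw [Finset.sum_ite_eq]
      simp [Finset.mem_range.2 hp]
    omega

lemma listPigeon (m k : ℕ) (hm : 0 < m) (l : List (ℤ × ℕ)) (h : ∀ p ∈ l, p.2 < m)
    (hlen : m * k ≤ l.length) : ∃ a, k ≤ (l.filter (fun p => p.2 = a)).length := by
  by_contra hcon
  push_neg at hcon
  rcases Nat.eq_zero_or_pos k with rfl | hk
  · exact absurd (Nat.zero_le _) (not_le.2 (hcon 0))
  have hsum := lenSum m l h
  have : ∑ a ∈ Finset.range m, (l.filter (fun p => p.2 = a)).length ≤ m * (k - 1) := by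
    calc ∑ a ∈ Finset.range m, (l.filter (fun p => p.2 = a)).length
        ≤ ∑ _a ∈ Finset.range m, (k-1) := Finset.sum_le_sum (fun a _ => by have := hcon a; omega)
      _ = m * (k-1) := by simp [Finset.sum_const, Finset.card_range]
  have hmk : m * (k-1) + m * 1 = m * k := by rw [← Nat.mul_add]; congr 1; omega
  omega

lemma ramseyLemma (m k : ℕ) (hm : 0 < m) : ∃ K : ℕ, ∀ (I : Finset ℤ) (c : ℤ → ℤ → ℕ),
    (∀ i ∈ I, ∀ j ∈ I, c i j < m) → K ≤ I.card →
    ∃ I', I' ⊆ I ∧ I'.card = k ∧ ∃ a, ∀ i ∈ I', ∀ j ∈ I', i < j → c i j = a := by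
  refine ⟨(m+1)^(m*k), ?_⟩
  intro I c hc hcard
  obtain ⟨l, hlen, hmem, hcol, hpw⟩ := chainLemma m (m*k) I c hc hcard
  obtain ⟨a, ha⟩ := listPigeon m k hm l hcol (by omega)
  set l1 := l.filter (fun p => p.2 = a) with hl1
  set l2 := l1.take k with hl2
  have hsub : l2.Sublist l := (List.take_sublist _ _).trans List.filter_sublist
  have hlen2 : l2.length = k := by
    rw [hl2, List.length_take]
    omega
  have hpw2 : l2.Pairwise (fun p q => p.1 < q.1 ∧ c p.1 q.1 = p.2) := hpw.sublist hsub
  have hal2 : ∀ p ∈ l2, p.2 = a := by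
    intro p hp
    have : p ∈ l1 := (List.take_sublist _ _).subset hp
    have := List.of_mem_filter this
    exact of_decide_eq_true this
  classical
  refine ⟨(l2.map Prod.fst).toFinset, ?_, ?_, a, ?_⟩
  · intro x hx
    rw [List.mem_toFinset] at hx
    obtain ⟨p, hp, rfl⟩ := List.mem_map.1 hx
    exact hmem p (hsub.subset hp)
  · have hnd : (l2.map Prod.fst).Nodup := by
      have hpm : (l2.map Prod.fst).Pairwise (· < ·) :=
        List.pairwise_map.2 (hpw2.imp (fun h => h.1))
      exact hpm.imp ne_of_lt
    rw [List.toFinset_card_of_nodup hnd, List.length_map, hlen2]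
  · intro i hi j hj hij
    rw [List.mem_toFinset] at hi hj
    obtain ⟨p, hp, rfl⟩ := List.mem_map.1 hi
    obtain ⟨q, hq, rfl⟩ := List.mem_map.1 hj
    have hpq : p ≠ q := fun h => by rw [h] at hij; exact lt_irrefl _ hij
    have hsym := hpw2.imp (fun {x y} h => Or.inl h :
      ∀ {x y : ℤ × ℕ}, (x.1 < y.1 ∧ c x.1 y.1 = x.2) →
        ((x.1 < y.1 ∧ c x.1 y.1 = x.2) ∨ (y.1 < x.1 ∧ c y.1 x.1 = y.2)))
    have hS : Symmetric (fun (x y : ℤ × ℕ) =>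
        (x.1 < y.1 ∧ c x.1 y.1 = x.2) ∨ (y.1 < x.1 ∧ c y.1 x.1 = y.2)) := by
      intro x y h; tauto
    haveI : Std.Symm (fun (x y : ℤ × ℕ) =>
        (x.1 < y.1 ∧ c x.1 y.1 = x.2) ∨ (y.1 < x.1 ∧ c y.1 x.1 = y.2)) := ⟨fun _ _ h => hS h⟩
    have := hsym.forall hp hq hpq
    rcases this with ⟨_, hcc⟩ | ⟨hlt, _⟩
    · rw [hcc, hal2 p hp]
    · exact absurd hij (not_lt.2 (le_of_lt hlt))


/-- For every integer `k ≥ 0` and `0 < φ, μ ≤ 1` with `φ ≤ 1/5`, there is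
an integer `K ≥ k` such that for every graph `G` and every `(φ,μ)`-shrink-resistant
blockade of length at least `K` in `G` with `1 - μ ≥ |G|^(-φ)`, there exists `I' ⊆ I`
with `|I'| = k` such that `(B i : i ∈ I')` has a `(5φ,μ)`-band. -/
theorem stmt_6 (k : ℕ) (phi mu : ℝ) (hphi0 : 0 < phi) (hphi1 : phi ≤ 1)
    (hphi5 : phi ≤ 1 / 5) (hmu0 : 0 < mu) (hmu1 : mu ≤ 1) :
    ∃ K : ℕ, k ≤ K ∧
      ∀ (V : Type) [Fintype V] (G : SimpleGraph V) (I : Finset ℤ) (B : ℤ → Set V),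
        IsBlockade I B → ShrinkResistant G I B phi mu → K ≤ I.card →
        (Fintype.card V : ℝ) ^ (-phi) ≤ 1 - mu →
        ∃ I' ⊆ I, I'.card = k ∧
          ∃ tau : ℝ, 0 < tau ∧ tau ≤ 1 ∧ IsBand G I' B tau (5 * phi) mu := by
  classical
  set m : ℕ := ⌊1/(2*phi)⌋₊ + 1 with hm
  obtain ⟨Kr, hKr⟩ := ramseyLemma m k (Nat.succ_pos _)
  refine ⟨max k (max 1 Kr), le_max_left _ _, ?_⟩
  intro V _ G I B hBl hSR hcard hmu'
  set N : ℝ := ((Fintype.card V : ℕ) : ℝ) with hN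
  have h2p : (0:ℝ) < 2*phi := by linarith
  have hIne : I.Nonempty := by
    rw [← Finset.card_pos]
    have h1 : 1 ≤ max k (max 1 Kr) := le_trans (le_max_left 1 Kr) (le_max_right k _)
    omega
  have hNge1 : (1:ℝ) ≤ N := by
    obtain ⟨i0, hi0⟩ := hIne
    obtain ⟨v, _⟩ := hBl.1 i0 hi0
    have : 0 < Fintype.card V := Fintype.card_pos_iff.2 ⟨v⟩
    rw [hN]; exact_mod_cast this
  have hN1 : 1 < N := by
    rcases lt_or_eq_of_le hNge1 with h | h
    · exact h
    · exfalso
      rw [← h, Real.one_rpow] at hmu'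
      linarith
  have hNpos : (0:ℝ) < N := by linarith
  set d : ℤ → ℤ → ℕ := fun i j => maxDegFrom G (B i) (B j) with hd
  set b : ℤ → ℝ := fun i => (((B i).ncard : ℕ) : ℝ) with hb
  have hbpos : ∀ i ∈ I, 0 < b i := by
    intro i hi
    have := (Set.ncard_pos (Set.toFinite (B i))).2 (hBl.1 i hi)
    show (0:ℝ) < (((B i).ncard : ℕ) : ℝ)
    exact_mod_cast this
  have hbleN : ∀ i, b i ≤ N := by
    intro i
    have h1 : (B i).ncard ≤ Fintype.card V := by
      have h2 := Set.ncard_le_ncard (Set.subset_univ (B i)) (Set.toFinite _)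
      rwa [Set.ncard_univ, Nat.card_eq_fintype_card] at h2
    show (((B i).ncard : ℕ) : ℝ) ≤ ((Fintype.card V : ℕ) : ℝ)
    exact_mod_cast h1
  set r : ℤ → ℤ → ℝ := fun i j => (d i j : ℝ) / b j with hr
  have hd1 : ∀ i ∈ I, ∀ j ∈ I, i ≠ j → 1 ≤ d i j := by
    intro i hi j hj hij
    by_contra h0
    push_neg at h0
    have hd0 : d i j = 0 := by omega
    have hle := hSR i hi j hj hij (B i) subset_rfl (B j) subset_rfl
      (by nlinarith [hbpos i hi]) (by nlinarith [hbpos j hj])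
    rw [show maxDegFrom G (B i) (B j) = d i j from rfl, hd0] at hle
    norm_num at hle
  have hdle : ∀ i j, (d i j : ℝ) ≤ b j := by
    intro i j
    have := maxDegFrom_le_ncard G (B i) (B j)
    show ((maxDegFrom G (B i) (B j) : ℕ) : ℝ) ≤ (((B j).ncard : ℕ) : ℝ)
    exact_mod_cast this
  have hrpos : ∀ i ∈ I, ∀ j ∈ I, i ≠ j → 0 < r i j := by
    intro i hi j hj hij
    apply div_pos _ (hbpos j hj)
    have := hd1 i hi j hj hij
    exact_mod_cast Nat.lt_of_lt_of_le Nat.zero_lt_one this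
  have hrle1 : ∀ i ∈ I, ∀ j ∈ I, i ≠ j → r i j ≤ 1 := by
    intro i hi j hj hij
    rw [hr, div_le_one (hbpos j hj)]
    exact hdle i j
  have hrlb : ∀ i ∈ I, ∀ j ∈ I, i ≠ j → 1/N ≤ r i j := by
    intro i hi j hj hij
    rw [hr, div_le_div_iff₀ hNpos (hbpos j hj)]
    have h1 : (1:ℝ) ≤ (d i j : ℝ) := by exact_mod_cast hd1 i hi j hj hij
    nlinarith [hbleN j, hbpos j hj]
  have hNmul : N ^ (-(2*phi)) * N ^ (2*phi) = 1 := by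
    rw [← Real.rpow_add hNpos, show -(2*phi) + 2*phi = (0:ℝ) by ring, Real.rpow_zero]
  have h2ppos : (0:ℝ) < N ^ (2*phi) := Real.rpow_pos_of_pos hNpos _
  have h2ppos' : (0:ℝ) < N ^ (-(2*phi)) := Real.rpow_pos_of_pos hNpos _
  have hcross : ∀ i ∈ I, ∀ j ∈ I, i ≠ j → r i j ≤ N^(2*phi) * r j i := by
    intro i hi j hj hij
    have hes := cross_count G (B i) (B j) (hBl.1 i hi) (hBl.1 j hj) phi mu hphi0 hmu0 hmu1 hmu'
      (fun X hX Y hY h1 h2 => hSR i hi j hj hij X hX Y hY h1 h2)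
    have hes' : (d i j : ℝ) * b i * N ^ (-(2*phi)) ≤ (d j i : ℝ) * b j := hes
    have hkey : (d i j:ℝ) * b i ≤ N^(2*phi) * (d j i:ℝ) * b j := by
      calc (d i j:ℝ) * b i = (d i j:ℝ) * b i * (N^(-(2*phi)) * N^(2*phi)) := by
            rw [hNmul, mul_one]
        _ = ((d i j:ℝ) * b i * N^(-(2*phi))) * N^(2*phi) := by ring
        _ ≤ ((d j i:ℝ) * b j) * N^(2*phi) := mul_le_mul_of_nonneg_right hes' h2ppos.le
        _ = N^(2*phi) * (d j i:ℝ) * b j := by ring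
    show (d i j : ℝ) / b j ≤ N^(2*phi) * ((d j i : ℝ) / b i)
    rw [← mul_div_assoc, div_le_div_iff₀ (hbpos j hj) (hbpos i hi)]
    exact hkey
  set col : ℤ → ℤ → ℕ := fun i j =>
    ⌊(-(Real.logb N (max (r i j) (r j i)))) / (2*phi)⌋₊ with hcol
  set c : ℤ → ℤ → ℕ := fun i j => if i = j then 0 else col i j with hcdef
  -- bounds on s for valid pairs
  have hsfacts : ∀ i ∈ I, ∀ j ∈ I, i ≠ j →
      0 ≤ -(Real.logb N (max (r i j) (r j i))) ∧
      -(Real.logb N (max (r i j) (r j i))) ≤ 1 ∧ 0 < max (r i j) (r j i) := by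
    intro i hi j hj hij
    have hMpos : 0 < max (r i j) (r j i) := lt_max_of_lt_left (hrpos i hi j hj hij)
    have hMle1 : max (r i j) (r j i) ≤ 1 :=
      max_le (hrle1 i hi j hj hij) (hrle1 j hj i hi (Ne.symm hij))
    have hMlb : 1/N ≤ max (r i j) (r j i) :=
      le_trans (hrlb i hi j hj hij) (le_max_left _ _)
    refine ⟨by simpa using Real.logb_nonpos hN1 hMpos.le hMle1, ?_, hMpos⟩
    have h1 : Real.logb N (1/N) ≤ Real.logb N (max (r i j) (r j i)) :=
      (Real.logb_le_logb hN1 (by positivity) hMpos).2 hMlb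
    have h2 : Real.logb N (1/N) = -1 := by
      rw [one_div, Real.logb_inv, Real.logb_self_eq_one hN1]
    linarith
  have hccolor : ∀ i ∈ I, ∀ j ∈ I, c i j < m := by
    intro i hi j hj
    rw [hcdef]
    by_cases hij : i = j
    · subst hij
      simp only [if_pos rfl]
      exact Nat.succ_pos _
    · simp only [hij, if_false]
      obtain ⟨hs0, hs1, _⟩ := hsfacts i hi j hj hij
      have hh : (-(Real.logb N (max (r i j) (r j i)))) / (2*phi) ≤ 1/(2*phi) :=
        div_le_div_of_nonneg_right hs1 h2p.le
      have hfl := Nat.floor_le_floor hh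
      have hcoleq : col i j = ⌊(-(Real.logb N (max (r i j) (r j i)))) / (2*phi)⌋₊ := rfl
      rw [hcoleq, hm]
      omega
  obtain ⟨I', hsub, hcardk, a, hmono⟩ := hKr I c hccolor
    (le_trans (le_trans (le_max_right 1 Kr) (le_max_right k _)) hcard)
  have hwin : ∀ p ∈ I, ∀ q ∈ I, p ≠ q → col p q = a →
      N^(-(2*phi*((a:ℝ)+1))) ≤ max (r p q) (r q p) ∧
      max (r p q) (r q p) ≤ N^(-(2*phi*(a:ℝ))) := by
    intro p hp q hq hpq hcola
    obtain ⟨hs0, _, hMpos⟩ := hsfacts p hp q hq hpq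
    set s : ℝ := -(Real.logb N (max (r p q) (r q p))) with hs
    have hcoleq : col p q = ⌊s/(2*phi)⌋₊ := rfl
    have hfl : (a:ℝ) ≤ s/(2*phi) := by
      rw [← hcola, hcoleq]
      exact Nat.floor_le (div_nonneg hs0 h2p.le)
    have hfu : s/(2*phi) < (a:ℝ)+1 := by
      rw [← hcola, hcoleq]
      exact_mod_cast Nat.lt_succ_floor (s/(2*phi))
    have hsa : 2*phi*(a:ℝ) ≤ s := by
      rw [mul_comm]
      exact (le_div_iff₀ h2p).1 hfl
    have hsb : s ≤ 2*phi*((a:ℝ)+1) := by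
      rw [mul_comm]
      exact le_of_lt ((div_lt_iff₀ h2p).1 hfu)
    have hMeq : max (r p q) (r q p) = N ^ (Real.logb N (max (r p q) (r q p))) :=
      (Real.rpow_logb hNpos (ne_of_gt hN1) hMpos).symm
    have hlogeq : Real.logb N (max (r p q) (r q p)) = -s := by rw [hs]; ring
    constructor
    · rw [hMeq, hlogeq]
      exact Real.rpow_le_rpow_of_exponent_le hN1.le (by linarith)
    · rw [hMeq, hlogeq]
      exact Real.rpow_le_rpow_of_exponent_le hN1.le (by linarith)
  set tau : ℝ := N^(-(2*phi*(a:ℝ))) with htau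
  refine ⟨I', hsub, hcardk, tau, Real.rpow_pos_of_pos hNpos _,
    Real.rpow_le_one_of_one_le_of_nonpos hN1.le
      (neg_nonpos.2 (mul_nonneg (by linarith : (0:ℝ) ≤ 2*phi) (Nat.cast_nonneg a))), ?_⟩
  intro h hh j hj hne
  have hhI : h ∈ I := hsub hh
  have hjI : j ∈ I := hsub hj
  have hwin2 : N^(-(2*phi*((a:ℝ)+1))) ≤ max (r h j) (r j h) ∧
      max (r h j) (r j h) ≤ N^(-(2*phi*(a:ℝ))) := by
    rcases Ne.lt_or_gt hne with hlt | hlt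
    · have hmm := hmono h hh j hj hlt
      rw [hcdef] at hmm
      simp only [hne, if_false] at hmm
      exact hwin h hhI j hjI hne hmm
    · have hmm := hmono j hj h hh hlt
      rw [hcdef] at hmm
      simp only [hne.symm, if_false] at hmm
      have := hwin j hjI h hhI hne.symm hmm
      rwa [max_comm] at this
  have hbj := hbpos j hjI
  have hdeq : (d h j : ℝ) = r h j * b j := by
    rw [hr]
    field_simp
  constructor
  · show (d h j : ℝ) ≤ tau * b j
    have h1 : r h j ≤ tau := le_trans (le_max_left _ _) hwin2.2
    rw [hdeq]
    exact mul_le_mul_of_nonneg_right h1 hbj.le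
  · intro X hX Y hY hXc hYc
    have hSRlt := hSR h hhI j hjI hne X hX Y hY hXc hYc
    have hrlow : tau * N^(-(4*phi)) ≤ r h j := by
      have hMle : max (r h j) (r j h) ≤ N^(2*phi) * r h j := by
        apply max_le
        · have h2 : (1:ℝ) ≤ N^(2*phi) := Real.one_le_rpow hN1.le (by linarith)
          calc r h j = 1 * r h j := (one_mul _).symm
            _ ≤ N^(2*phi) * r h j := mul_le_mul_of_nonneg_right h2 (hrpos h hhI j hjI hne).le
        · exact hcross j hjI h hhI hne.symm
      have e1 : tau * N^(-(4*phi)) = N^(-(2*phi*((a:ℝ)+1))) * N^(-(2*phi)) := by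
        rw [htau, ← Real.rpow_add hNpos, ← Real.rpow_add hNpos]
        congr 1
        ring
      have e2 : N^(2*phi) * N^(-(2*phi)) = 1 := by
        rw [← Real.rpow_add hNpos, show 2*phi + -(2*phi) = (0:ℝ) by ring, Real.rpow_zero]
      have hMle' : N^(-(2*phi*((a:ℝ)+1))) ≤ N^(2*phi) * r h j := le_trans hwin2.1 hMle
      rw [e1]
      calc N^(-(2*phi*((a:ℝ)+1))) * N^(-(2*phi))
          ≤ (N^(2*phi) * r h j) * N^(-(2*phi)) := mul_le_mul_of_nonneg_right hMle' h2ppos'.le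
        _ = r h j * (N^(2*phi) * N^(-(2*phi))) := by ring
        _ = r h j := by rw [e2, mul_one]
    have hphipos : (0:ℝ) < N^(-phi) := Real.rpow_pos_of_pos hNpos _
    have e3 : N^(-(4*phi)) * N^(-phi) = N^(-(5*phi)) := by
      rw [← Real.rpow_add hNpos]
      congr 1
      ring
    have hfinal : tau * N^(-(5*phi)) * b j ≤ (d h j : ℝ) * N^(-phi) := by
      calc tau * N^(-(5*phi)) * b j = (tau * N^(-(4*phi))) * b j * N^(-phi) := by
            rw [← e3]; ring
        _ ≤ r h j * b j * N^(-phi) :=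
            mul_le_mul_of_nonneg_right (mul_le_mul_of_nonneg_right hrlow hbj.le) hphipos.le
        _ = (d h j:ℝ) * N^(-phi) := by rw [hdeq]
    show tau * N^(-(5*phi)) * b j < (maxDegFrom G X Y : ℝ)
    exact lt_of_le_of_lt hfinal hSRlt
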